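/- Let n ≥ 3, let g be a positive-definite symmetric bilinear form on ℝⁿ, and let R_{abcd} be a tensor with the Riemann symmetries: R_{abcd} = −R_{bacd}, R_{abcd} = −R_{abdc}, R_{abcd} = R_{cdab}, and R_{abcd} + R_{acdb} + R_{adbc} = 0. Define R_{ab}{}^c{}_d = g^{ce} R_{abed}, Ric_{bd} = R_{ab}{}^a{}_d, R = g^{bd} Ric_{bd}, P_{ab} = Ric_{ab}/(n−1), and W_{ab}{}^c{}_d = R_{ab}{}^c{}_d − δ_a{}^c P_{bd} + δ_b{}^c P_{ad}. If W = 0, then R_{abcd} = (R/(n(n−1)))(g_{ac} g_{bd} − g_{bc} g_{ad}); that is, a projectively flat curvature tensor is a constant-curvature tensor (Beltrami's theorem, pointwise algebraic form). -/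

import Mathlib

open scoped BigOperators

/-!  Common setup: we work on open subsets `U` of `ℝⁿ` (modelled as `Fin n → ℝ`).
A torsion-free affine connection is recorded through its Christoffel symbols
`Γ x a b c = Γ_a{}^b{}_c`, symmetric in `a, c`.  `pd F a x` is the partial
derivative `∂_a F (x)`. -/

/-- Partial derivative `∂_a F` at `x`. -/
noncomputable def pd {n : ℕ} (F : (Fin n → ℝ) → ℝ) (a : Fin n) (x : Fin n → ℝ) : ℝ :=
  fderiv ℝ F x (Pi.single a 1)

/-- Kronecker delta. -/
def kron {n : ℕ} (a b : Fin n) : ℝ := if a = b then 1 else 0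

/-- Curvature tensor `ρ_{ab}{}^c{}_d` of a connection with Christoffel symbols
`Γ x a b c = Γ_a{}^b{}_c`. -/
noncomputable def curv {n : ℕ} (Γ : (Fin n → ℝ) → Fin n → Fin n → Fin n → ℝ)
    (x : Fin n → ℝ) (a b c d : Fin n) : ℝ :=
  pd (fun y => Γ y b c d) a x - pd (fun y => Γ y a c d) b x
    + ∑ e, Γ x a c e * Γ x b e d - ∑ e, Γ x b c e * Γ x a e d

/-- Ricci tensor `Ric_{ad} = ρ_{ba}{}^b{}_d`. -/
noncomputable def ricci {n : ℕ} (Γ : (Fin n → ℝ) → Fin n → Fin n → Fin n → ℝ)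
    (x : Fin n → ℝ) (a d : Fin n) : ℝ :=
  ∑ b, curv Γ x b a b d

/-- Projective Schouten tensor `P_{ab} = Ric_{ab}/(n-1)`. -/
noncomputable def projP {n : ℕ} (Γ : (Fin n → ℝ) → Fin n → Fin n → Fin n → ℝ)
    (x : Fin n → ℝ) (a b : Fin n) : ℝ :=
  ricci Γ x a b / ((n : ℝ) - 1)

/-- Projective Weyl tensor `W_{ab}{}^c{}_d = ρ_{ab}{}^c{}_d - δ_a{}^c P_{bd} + δ_b{}^c P_{ad}`. -/
noncomputable def projW {n : ℕ} (Γ : (Fin n → ℝ) → Fin n → Fin n → Fin n → ℝ)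
    (x : Fin n → ℝ) (a b c d : Fin n) : ℝ :=
  curv Γ x a b c d - kron a c * projP Γ x b d + kron b c * projP Γ x a d

/-- Covariant derivative `∇_a P_{bc}` of the projective Schouten tensor. -/
noncomputable def nablaP {n : ℕ} (Γ : (Fin n → ℝ) → Fin n → Fin n → Fin n → ℝ)
    (x : Fin n → ℝ) (a b c : Fin n) : ℝ :=
  pd (fun y => projP Γ y b c) a x - ∑ d, Γ x a d b * projP Γ x d c
    - ∑ d, Γ x a d c * projP Γ x b d

/-- Cotton–York tensor `Y_{abc} = ½(∇_a P_{bc} - ∇_b P_{ac})`. -/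
noncomputable def cottonY {n : ℕ} (Γ : (Fin n → ℝ) → Fin n → Fin n → Fin n → ℝ)
    (x : Fin n → ℝ) (a b c : Fin n) : ℝ :=
  (nablaP Γ x a b c - nablaP Γ x b a c) / 2

/-- Covariant derivative `∇_a σ^{bc}` of a contravariant symmetric 2-tensor field. -/
noncomputable def nablaSig {n : ℕ} (Γ : (Fin n → ℝ) → Fin n → Fin n → Fin n → ℝ)
    (σ : (Fin n → ℝ) → Fin n → Fin n → ℝ) (x : Fin n → ℝ) (a b c : Fin n) : ℝ :=
  pd (fun y => σ y b c) a x + ∑ d, Γ x a b d * σ x d c + ∑ d, Γ x a c d * σ x b d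

/-- Covariant derivative `∇_a μ^b` of a vector field. -/
noncomputable def nablaVec {n : ℕ} (Γ : (Fin n → ℝ) → Fin n → Fin n → Fin n → ℝ)
    (μ : (Fin n → ℝ) → Fin n → ℝ) (x : Fin n → ℝ) (a b : Fin n) : ℝ :=
  pd (fun y => μ y b) a x + ∑ c, Γ x a b c * μ x c

/-- Beltrami, pointwise algebraic form: if the projective Weyl
tensor of a curvature tensor with the Riemann symmetries vanishes, then the
curvature tensor is a constant-curvature tensor,
`R_{abcd} = (R/(n(n-1)))(g_{ac} g_{bd} - g_{bc} g_{ad})`. -/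
theorem projectively_flat_curvature_is_constant_curvature
    {n : ℕ} (hn : 3 ≤ n)
    (g : Matrix (Fin n) (Fin n) ℝ) (hg : g.PosDef)
    (R : Fin n → Fin n → Fin n → Fin n → ℝ)
    (hR1 : ∀ a b c d, R a b c d = - R b a c d)
    (hR2 : ∀ a b c d, R a b c d = - R a b d c)
    (hR3 : ∀ a b c d, R a b c d = R c d a b)
    (hR4 : ∀ a b c d, R a b c d + R a c d b + R a d b c = 0)
    (Rup : Fin n → Fin n → Fin n → Fin n → ℝ)
    (hRup : ∀ a b c d, Rup a b c d = ∑ e, g⁻¹ c e * R a b e d)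
    (Ric : Fin n → Fin n → ℝ)
    (hRic : ∀ b d, Ric b d = ∑ a, Rup a b a d)
    (S : ℝ) (hS : S = ∑ b, ∑ d, g⁻¹ b d * Ric b d)
    (P : Fin n → Fin n → ℝ)
    (hP : ∀ a b, P a b = Ric a b / ((n : ℝ) - 1))
    (W : Fin n → Fin n → Fin n → Fin n → ℝ)
    (hW : ∀ a b c d, W a b c d = Rup a b c d - kron a c * P b d + kron b c * P a d)
    (hW0 : ∀ a b c d, W a b c d = 0) :
    ∀ a b c d,
      R a b c d = (S / ((n : ℝ) * ((n : ℝ) - 1))) * (g a c * g b d - g b c * g a d) := by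
    -- basic facts about g
  have hdet : IsUnit g.det := isUnit_iff_ne_zero.mpr hg.det_pos.ne'
  have hmul : g * g⁻¹ = 1 := Matrix.mul_nonsing_inv g hdet
  have hmul' : g⁻¹ * g = 1 := Matrix.nonsing_inv_mul g hdet
  have hsym : ∀ a b, g a b = g b a := by
    intro a b
    have := hg.isHermitian.apply a b
    simpa using this.symm
  have hsyminv : ∀ a b, g⁻¹ a b = g⁻¹ b a := by
    intro a b
    have := (hg.isHermitian.inv).apply a b
    simpa using this.symm
  have h1 : ∀ a b, (∑ c, g⁻¹ a c * g c b) = kron a b := by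
    intro a b
    have := congrFun (congrFun hmul' a) b
    simpa [Matrix.mul_apply, Matrix.one_apply, kron] using this
  have h2 : ∀ a b, (∑ c, g a c * g⁻¹ c b) = kron a b := by
    intro a b
    have := congrFun (congrFun hmul a) b
    simpa [Matrix.mul_apply, Matrix.one_apply, kron] using this
  have hn3 : (3 : ℝ) ≤ (n : ℝ) := by exact_mod_cast hn
  have hnne : (n : ℝ) ≠ 0 := by linarith
  have hn1ne : (n : ℝ) - 1 ≠ 0 := by linarith
  -- Rup in terms of P
  have hRupform : ∀ a b c d, Rup a b c d = kron a c * P b d - kron b c * P a d := by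
    intro a b c d
    have h := hW0 a b c d
    rw [hW] at h
    linarith
  -- lowering: R from Rup
  have hlow : ∀ a b c d, R a b c d = ∑ e, g c e * Rup a b e d := by
    intro a b c d
    symm
    calc ∑ e, g c e * Rup a b e d
        = ∑ e, ∑ f, g c e * g⁻¹ e f * R a b f d := by
          simp [hRup, Finset.mul_sum, mul_assoc]
      _ = ∑ f, (∑ e, g c e * g⁻¹ e f) * R a b f d := by
          rw [Finset.sum_comm]
          simp [Finset.sum_mul]
      _ = ∑ f, kron c f * R a b f d := by simp [h2]
      _ = R a b c d := by simp [kron, ite_mul]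
  -- explicit form of R
  have hRform : ∀ a b c d, R a b c d = g c a * P b d - g c b * P a d := by
    intro a b c d
    rw [hlow]
    have : ∀ e, g c e * Rup a b e d
        = g c e * (kron a e * P b d) - g c e * (kron b e * P a d) := by
      intro e; rw [hRupform]; ring
    rw [Finset.sum_congr rfl fun e _ => this e, Finset.sum_sub_distrib]
    simp [kron, mul_ite, ← mul_assoc, ite_mul]
  -- antisymmetry in last two indices gives the key identity
  have hstar : ∀ a b c d,
      g c a * P b d - g c b * P a d + g d a * P b c - g d b * P a c = 0 := by
    intro a b c d
    have h := hR2 a b c d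
    rw [hRform, hRform] at h
    linarith
  -- contract with g⁻¹
  set T : ℝ := ∑ a, ∑ c, g⁻¹ c a * P a c with hT
  have htrace : (∑ a, ∑ c, g⁻¹ c a * g c a) = (n : ℝ) := by
    calc (∑ a : Fin n, ∑ c, g⁻¹ c a * g c a)
        = ∑ a : Fin n, ∑ c, g⁻¹ a c * g c a := by
          refine Finset.sum_congr rfl fun a _ => Finset.sum_congr rfl fun c _ => ?_
          rw [hsyminv]
      _ = ∑ a : Fin n, kron a a := by simp [h1]
      _ = (n : ℝ) := by simp [kron]
  have hPprop : ∀ b d, P b d = g d b * T / (n : ℝ) := by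
    intro b d
    have hsum : (∑ a, ∑ c, g⁻¹ c a *
        (g c a * P b d - g c b * P a d + g d a * P b c - g d b * P a c)) = 0 := by
      simp [hstar]
    have e1 : (∑ a, ∑ c, g⁻¹ c a * (g c a * P b d)) = (n : ℝ) * P b d := by
      calc (∑ a, ∑ c, g⁻¹ c a * (g c a * P b d))
          = (∑ a, ∑ c, g⁻¹ c a * g c a) * P b d := by
            simp [Finset.sum_mul, mul_assoc]
        _ = (n : ℝ) * P b d := by rw [htrace]
    have e2 : (∑ a, ∑ c, g⁻¹ c a * (g c b * P a d)) = P b d := by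
      calc (∑ a, ∑ c, g⁻¹ c a * (g c b * P a d))
          = ∑ a, (∑ c, g⁻¹ a c * g c b) * P a d := by
            refine Finset.sum_congr rfl fun a _ => ?_
            rw [Finset.sum_mul]
            refine Finset.sum_congr rfl fun c _ => ?_
            rw [hsyminv]; ring
        _ = ∑ a, kron a b * P a d := by simp [h1]
        _ = P b d := by simp [kron, ite_mul]
    have e3 : (∑ a, ∑ c, g⁻¹ c a * (g d a * P b c)) = P b d := by
      calc (∑ a, ∑ c, g⁻¹ c a * (g d a * P b c))
          = ∑ c, (∑ a, g⁻¹ c a * g a d) * P b c := by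
            rw [Finset.sum_comm]
            refine Finset.sum_congr rfl fun c _ => ?_
            rw [Finset.sum_mul]
            refine Finset.sum_congr rfl fun a _ => ?_
            rw [hsym d a]; ring
        _ = ∑ c, kron c d * P b c := by simp [h1]
        _ = P b d := by simp [kron, ite_mul]
    have e4 : (∑ a, ∑ c, g⁻¹ c a * (g d b * P a c)) = g d b * T := by
      rw [hT, Finset.mul_sum]
      refine Finset.sum_congr rfl fun a _ => ?_
      rw [Finset.mul_sum]
      refine Finset.sum_congr rfl fun c _ => ?_
      ring
    have expand : (∑ a, ∑ c, g⁻¹ c a *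
        (g c a * P b d - g c b * P a d + g d a * P b c - g d b * P a c))
        = (∑ a, ∑ c, g⁻¹ c a * (g c a * P b d))
          - (∑ a, ∑ c, g⁻¹ c a * (g c b * P a d))
          + (∑ a, ∑ c, g⁻¹ c a * (g d a * P b c))
          - (∑ a, ∑ c, g⁻¹ c a * (g d b * P a c)) := by
      rw [← Finset.sum_sub_distrib, ← Finset.sum_add_distrib, ← Finset.sum_sub_distrib]
      refine Finset.sum_congr rfl fun a _ => ?_
      rw [← Finset.sum_sub_distrib, ← Finset.sum_add_distrib, ← Finset.sum_sub_distrib]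
      refine Finset.sum_congr rfl fun c _ => ?_
      ring
    rw [expand, e1, e2, e3, e4] at hsum
    field_simp
    linarith
  -- relate S and T
  have hRicP : ∀ b d, Ric b d = ((n : ℝ) - 1) * P b d := by
    intro b d
    rw [hRic]
    have : ∀ a, Rup a b a d = kron a a * P b d - kron b a * P a d := fun a => hRupform a b a d
    rw [Finset.sum_congr rfl fun a _ => this a, Finset.sum_sub_distrib]
    simp [kron, ite_mul]
    ring
  have hST : S = ((n : ℝ) - 1) * T := by
    rw [hS, hT, Finset.mul_sum]
    refine Finset.sum_congr rfl fun b _ => ?_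
    rw [Finset.mul_sum]
    refine Finset.sum_congr rfl fun d _ => ?_
    rw [hRicP, hsyminv]
    ring
  -- conclude
  intro a b c d
  rw [hRform, hPprop, hPprop, hST, hsym c a, hsym c b, hsym d b, hsym d a]
  field_simp
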